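/- Let b > 0, let β ≥ 0, and let f ∈ C²[0,b]. Then there exists K > 0 such that for every N ∈ ℕ with N ≥ 1, the modified midpoint quadrature error (with a = 0) satisfies |E_N| ≤ K/N². -/

import Mathlib

open Filter MeasureTheory Set

/-- The modified midpoint quadrature error `E_N` for `∫_a^b x^β f(x) dx`, where the singular
factor `x^β` is integrated exactly on each subinterval and `f` is evaluated at midpoints:
here `h = (b-a)/N` and `x_t = a + t·h`. -/
noncomputable def midpointError (a b β : ℝ) (f : ℝ → ℝ) (N : ℕ) : ℝ :=
  (∫ x in a..b, x ^ β * f x) -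
    ∑ n ∈ Finset.range N,
      ((a + ((n : ℝ) + 1) * ((b - a) / N)) ^ (β + 1) -
          (a + (n : ℝ) * ((b - a) / N)) ^ (β + 1)) / (β + 1) *
        f (a + ((n : ℝ) + 1 / 2) * ((b - a) / N))

lemma taylor_aux {s : Set ℝ} (hs : Convex ℝ s) {f g g' : ℝ → ℝ} {M : ℝ}
    (hd1 : ∀ x ∈ s, HasDerivWithinAt f (g x) s x)
    (hd2 : ∀ x ∈ s, HasDerivWithinAt g (g' x) s x)
    (hM : ∀ x ∈ s, |g' x| ≤ M)
    {m x : ℝ} (hm : m ∈ s) (hx : x ∈ s) :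
    |f x - f m - g m * (x - m)| ≤ M * (x - m) ^ 2 := by
  have lip : ∀ y ∈ s, |g y - g m| ≤ M * |y - m| := by
    intro y hy
    have := hs.norm_image_sub_le_of_norm_hasDerivWithin_le hd2
      (fun z hz => hM z hz) hm hy
    simpa [Real.norm_eq_abs] using this
  set t : Set ℝ := uIcc m x with ht_def
  have ht : t ⊆ s := hs.ordConnected.uIcc_subset hm hx
  have htc : Convex ℝ t := convex_uIcc m x
  set F : ℝ → ℝ := fun y => f y - g m * y with hF
  have hdF : ∀ y ∈ t, HasDerivWithinAt F (g y - g m) t y := by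
    intro y hy
    have h1 : HasDerivWithinAt f (g y) t y := (hd1 y (ht hy)).mono ht
    have h2 : HasDerivWithinAt (fun z => g m * z) (g m) t y := by
      simpa using ((hasDerivAt_id y).const_mul (g m)).hasDerivWithinAt (s := t)
    exact h1.sub h2
  have bnd : ∀ y ∈ t, ‖g y - g m‖ ≤ M * |x - m| := by
    intro y hy
    have hy' : |y - m| ≤ |x - m| := by
      have e1 : x - m ≤ |x - m| := le_abs_self _
      have e2 : m - x ≤ |x - m| := by rw [abs_sub_comm]; exact le_abs_self _
      rcases Set.mem_uIcc.mp hy with ⟨h1, h2⟩ | ⟨h1, h2⟩ <;>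
        (rw [abs_le]; constructor <;> linarith)
    have hM0 : 0 ≤ M := le_trans (abs_nonneg _) (hM m hm)
    calc ‖g y - g m‖ = |g y - g m| := rfl
      _ ≤ M * |y - m| := lip y (ht hy)
      _ ≤ M * |x - m| := by nlinarith
  have := htc.norm_image_sub_le_of_norm_hasDerivWithin_le hdF bnd
    (left_mem_uIcc) (right_mem_uIcc)
  have e : f x - f m - g m * (x - m) = F x - F m := by simp [hF]; ring
  rw [e]
  calc |F x - F m| ≤ (M * |x - m|) * |x - m| := by
        simpa [Real.norm_eq_abs] using this
    _ = M * (x - m) ^ 2 := by rw [mul_assoc, abs_mul_abs_self]; ring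

set_option maxHeartbeats 2000000 in
theorem stmt4 (b β : ℝ) (hb : 0 < b) (hβ : 0 ≤ β)
    (f : ℝ → ℝ) (hf : ContDiffOn ℝ 2 f (Set.Icc 0 b)) :
    ∃ K : ℝ, 0 < K ∧ ∀ N : ℕ, 1 ≤ N →
      |midpointError 0 b β f N| ≤ K / (N : ℝ) ^ 2 := by
  set s : Set ℝ := Set.Icc 0 b with hs_def
  have hsconv : Convex ℝ s := convex_Icc 0 b
  have hsu : UniqueDiffOn ℝ s := uniqueDiffOn_Icc hb
  set g1 : ℝ → ℝ := derivWithin f s with hg1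
  set g2 : ℝ → ℝ := derivWithin g1 s with hg2
  have hf1 : ContDiffOn ℝ 1 g1 s := hf.derivWithin hsu (by norm_num)
  have hd1 : ∀ x ∈ s, HasDerivWithinAt f (g1 x) s x := fun x hx =>
    ((hf.differentiableOn (by norm_num)) x hx).hasDerivWithinAt
  have hd2 : ∀ x ∈ s, HasDerivWithinAt g1 (g2 x) s x := fun x hx =>
    ((hf1.differentiableOn (by norm_num)) x hx).hasDerivWithinAt
  have hc1 : ContinuousOn g1 s := hf1.continuousOn
  have hc2 : ContinuousOn g2 s := hf1.continuousOn_derivWithin hsu (by norm_num)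
  obtain ⟨M1, hM1⟩ := (isCompact_Icc (a := (0:ℝ)) (b := b)).exists_bound_of_continuousOn hc1
  obtain ⟨M2, hM2⟩ := (isCompact_Icc (a := (0:ℝ)) (b := b)).exists_bound_of_continuousOn hc2
  set M1' : ℝ := max M1 0 with hM1'
  set M2' : ℝ := max M2 0 with hM2'
  have hM1'' : ∀ x ∈ s, |g1 x| ≤ M1' := fun x hx =>
    le_trans (hM1 x hx) (le_max_left _ _)
  have hM2'' : ∀ x ∈ s, |g2 x| ≤ M2' := fun x hx =>
    le_trans (hM2 x hx) (le_max_left _ _)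
  have hM1'0 : 0 ≤ M1' := le_max_right _ _
  have hM2'0 : 0 ≤ M2' := le_max_right _ _
  have hbβ : (0:ℝ) ≤ b ^ β := Real.rpow_nonneg hb.le β
  set D : ℝ := b ^ β * M2' * b / 4 + M1' * b ^ β / 2 with hD
  have hD0 : 0 ≤ D := by positivity
  refine ⟨b ^ 2 * D + 1, by positivity, ?_⟩
  intro N hN
  have hN0 : (0:ℝ) < N := by exact_mod_cast Nat.lt_of_lt_of_le Nat.zero_lt_one hN
  set h : ℝ := b / N with hh_def
  have hh0 : 0 < h := div_pos hb hN0
  set u : ℕ → ℝ := fun n => (n : ℝ) * h with hu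
  set mid : ℕ → ℝ := fun n => ((n : ℝ) + 1 / 2) * h with hmid
  have huN : u N = b := by
    show (N:ℝ) * h = b
    rw [hh_def]; field_simp [hN0.ne']
  have hu0 : u 0 = 0 := by simp [hu]
  have husucc : ∀ n : ℕ, u (n + 1) = ((n : ℝ) + 1) * h := by
    intro n
    show ((n + 1 : ℕ) : ℝ) * h = ((n : ℝ) + 1) * h
    push_cast; ring
  have hsub : ∀ n : ℕ, n < N → Set.Icc (u n) (u (n + 1)) ⊆ s := by
    intro n hn
    apply Set.Icc_subset_Icc
    · positivity
    · rw [husucc, ← huN]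
      have : ((n:ℝ) + 1) ≤ (N:ℝ) := by exact_mod_cast hn
      simp only [hu]
      nlinarith
  have hle : ∀ n : ℕ, u n ≤ u (n + 1) := by
    intro n; rw [husucc]; simp only [hu]; nlinarith
  have hcont : ContinuousOn (fun x => x ^ β * f x) s :=
    (Real.continuous_rpow_const hβ).continuousOn.mul hf.continuousOn
  have hint : ∀ n : ℕ, n < N →
      IntervalIntegrable (fun x => x ^ β * f x) volume (u n) (u (n + 1)) := by
    intro n hn
    apply ContinuousOn.intervalIntegrable
    rw [uIcc_of_le (hle n)]
    exact hcont.mono (hsub n hn)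
  have hsplit : (∫ x in (0:ℝ)..b, x ^ β * f x) =
      ∑ n ∈ Finset.range N, ∫ x in u n..u (n + 1), x ^ β * f x := by
    rw [← hu0, ← huN]
    exact (intervalIntegral.sum_integral_adjacent_intervals hint).symm
  have hw : ∀ n : ℕ, (∫ x in u n..u (n + 1), x ^ β) =
      ((u (n + 1)) ^ (β + 1) - (u n) ^ (β + 1)) / (β + 1) :=
    fun n => integral_rpow (Or.inl (by linarith))
  -- rewrite midpointError as a sum of per-interval errors
  set e : ℕ → ℝ := fun n => (∫ x in u n..u (n + 1), x ^ β * f x) -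
      (∫ x in u n..u (n + 1), x ^ β) * f (mid n) with he
  have hE : midpointError 0 b β f N = ∑ n ∈ Finset.range N, e n := by
    unfold midpointError
    rw [hsplit, ← Finset.sum_sub_distrib]
    apply Finset.sum_congr rfl
    intro n _
    have e1 : (0:ℝ) + ((n:ℝ) + 1) * ((b - 0) / N) = u (n + 1) := by
      rw [husucc n, hh_def]; ring
    have e2 : (0:ℝ) + (n:ℝ) * ((b - 0) / N) = u n := by
      show _ = (n:ℝ) * h
      rw [hh_def]; ring
    have e3 : (0:ℝ) + ((n:ℝ) + 1 / 2) * ((b - 0) / N) = mid n := by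
      show _ = ((n:ℝ) + 1 / 2) * h
      rw [hh_def]; ring
    rw [e1, e2, e3]
    simp only [he]
    rw [hw n]
  -- per-interval bound
  set C1 : ℝ := b ^ β * (M2' * (h / 2) ^ 2) with hC1
  set Cc : ℝ := M1' * (h / 2) * h with hCc
  have hrc : Continuous (fun x : ℝ => x ^ β) := Real.continuous_rpow_const hβ
  have key : ∀ n ∈ Finset.range N,
      |e n| ≤ C1 * h + Cc * ((u (n + 1)) ^ β - (u n) ^ β) := by
    intro n hn'
    have hn : n < N := Finset.mem_range.mp hn'
    have hqp : u (n + 1) - u n = h := by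
      rw [husucc]; show _ - (n : ℝ) * h = h; ring
    have hpq : u n ≤ u (n + 1) := hle n
    have hIs : Set.Icc (u n) (u (n + 1)) ⊆ s := hsub n hn
    have hp0 : 0 ≤ u n := by show (0:ℝ) ≤ (n : ℝ) * h; positivity
    have hqb : u (n + 1) ≤ b := ((hIs (Set.right_mem_Icc.mpr hpq)).2)
    have hmId : mid n = (u n + u (n + 1)) / 2 := by
      rw [husucc]; show ((n : ℝ) + 1 / 2) * h = _; show _ = ((n:ℝ) * h + _)/2; ring
    have hmmem : mid n ∈ Set.Icc (u n) (u (n + 1)) := by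
      rw [hmId]; constructor <;> [skip; skip] <;> nlinarith [hh0.le]
    have hms : mid n ∈ s := hIs hmmem
    set c : ℝ := g1 (mid n) with hc
    set T : ℝ → ℝ := fun x => f x - f (mid n) - c * (x - mid n) with hT
    set φ1 : ℝ → ℝ := fun x => x ^ β * T x with hφ1
    set φ2 : ℝ → ℝ := fun x => (x ^ β - (mid n) ^ β) * (x - mid n) with hφ2
    set φ3 : ℝ → ℝ := fun x => x - mid n with hφ3
    have hTc : ContinuousOn T (Set.uIcc (u n) (u (n + 1))) := by
      rw [uIcc_of_le hpq]
      exact ((hf.continuousOn.mono hIs).sub continuousOn_const).sub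
        (continuousOn_const.mul (continuousOn_id.sub continuousOn_const))
    have i1 : IntervalIntegrable φ1 volume (u n) (u (n + 1)) :=
      (hrc.continuousOn.mul hTc).intervalIntegrable
    have i2 : IntervalIntegrable φ2 volume (u n) (u (n + 1)) :=
      (((hrc.sub continuous_const).mul (continuous_id.sub continuous_const))).intervalIntegrable _ _
    have i3 : IntervalIntegrable φ3 volume (u n) (u (n + 1)) :=
      (continuous_id.sub continuous_const).intervalIntegrable _ _
    have i0 : IntervalIntegrable (fun x : ℝ => x ^ β * f (mid n)) volume (u n) (u (n + 1)) :=
      (hrc.mul continuous_const).intervalIntegrable _ _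
    have i23 : IntervalIntegrable (fun x => c * φ2 x + (c * (mid n) ^ β) * φ3 x)
        volume (u n) (u (n + 1)) :=
      (i2.const_mul c).add (i3.const_mul _)
    have hdecomp : e n = (∫ x in u n..u (n + 1), φ1 x) +
        (c * (∫ x in u n..u (n + 1), φ2 x) +
          (c * (mid n) ^ β) * (∫ x in u n..u (n + 1), φ3 x)) := by
      have step1 : e n = ∫ x in u n..u (n + 1), (x ^ β * f x - x ^ β * f (mid n)) := by
        simp only [he]
        rw [intervalIntegral.integral_sub (hint n hn) i0,
          intervalIntegral.integral_mul_const]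
      rw [step1, ← intervalIntegral.integral_const_mul, ← intervalIntegral.integral_const_mul,
        ← intervalIntegral.integral_add (i2.const_mul c) (i3.const_mul _),
        ← intervalIntegral.integral_add i1 i23]
      apply intervalIntegral.integral_congr
      intro x _
      simp only [hφ1, hφ2, hφ3, hT]
      ring
    have hzero : (∫ x in u n..u (n + 1), φ3 x) = 0 := by
      have st : (∫ x in u n..u (n + 1), φ3 x) =
          (∫ x in u n..u (n + 1), x) - (∫ x in u n..u (n + 1), mid n) :=
        intervalIntegral.integral_sub intervalIntegral.intervalIntegrable_id intervalIntegrable_const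
      rw [st, integral_id, intervalIntegral.integral_const, smul_eq_mul, hmId]
      ring
    have hbound1 : ∀ x ∈ Set.uIoc (u n) (u (n + 1)), ‖φ1 x‖ ≤ C1 := by
      intro x hx
      rw [Set.uIoc_of_le hpq] at hx
      have hxI : x ∈ Set.Icc (u n) (u (n + 1)) := ⟨hx.1.le, hx.2⟩
      have hxs : x ∈ s := hIs hxI
      have hx0 : 0 ≤ x := le_trans hp0 hxI.1
      have hxb : x ≤ b := le_trans hxI.2 hqb
      have hTb : |T x| ≤ M2' * (x - mid n) ^ 2 :=
        taylor_aux hsconv hd1 hd2 hM2'' hms hxs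
      have hxm : (x - mid n) ^ 2 ≤ (h / 2) ^ 2 := by
        have := hxI.1; have := hxI.2
        apply sq_le_sq' <;> rw [hmId] <;> linarith [hqp]
      have hxβ : x ^ β ≤ b ^ β := Real.rpow_le_rpow hx0 hxb hβ
      have hxβ0 : 0 ≤ x ^ β := Real.rpow_nonneg hx0 β
      rw [Real.norm_eq_abs]
      simp only [hφ1]
      rw [abs_mul, abs_of_nonneg hxβ0]
      calc x ^ β * |T x| ≤ b ^ β * (M2' * (h / 2) ^ 2) := by
            apply mul_le_mul hxβ _ (abs_nonneg _) hbβ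
            exact le_trans hTb (mul_le_mul_of_nonneg_left hxm hM2'0)
        _ = C1 := rfl
    have hA : |∫ x in u n..u (n + 1), φ1 x| ≤ C1 * h := by
      have h2 := intervalIntegral.norm_integral_le_of_norm_le_const hbound1
      rw [Real.norm_eq_abs, hqp, abs_of_pos hh0] at h2
      exact h2
    have hbound2 : ∀ x ∈ Set.uIoc (u n) (u (n + 1)),
        ‖φ2 x‖ ≤ ((u (n + 1)) ^ β - (u n) ^ β) * (h / 2) := by
      intro x hx
      rw [Set.uIoc_of_le hpq] at hx
      have hxI : x ∈ Set.Icc (u n) (u (n + 1)) := ⟨hx.1.le, hx.2⟩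
      have hx0 : 0 ≤ x := le_trans hp0 hxI.1
      have r1 : (u n) ^ β ≤ x ^ β := Real.rpow_le_rpow hp0 hxI.1 hβ
      have r2 : x ^ β ≤ (u (n + 1)) ^ β := Real.rpow_le_rpow hx0 hxI.2 hβ
      have r3 : (u n) ^ β ≤ (mid n) ^ β := Real.rpow_le_rpow hp0 hmmem.1 hβ
      have r4 : (mid n) ^ β ≤ (u (n + 1)) ^ β :=
        Real.rpow_le_rpow (le_trans hp0 hmmem.1) hmmem.2 hβ
      have a1 : |x ^ β - (mid n) ^ β| ≤ (u (n + 1)) ^ β - (u n) ^ β := by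
        rw [abs_le]; constructor <;> linarith
      have a2 : |x - mid n| ≤ h / 2 := by
        have := hxI.1; have := hxI.2
        rw [abs_le, hmId]; constructor <;> linarith [hqp]
      rw [Real.norm_eq_abs]
      simp only [hφ2]
      rw [abs_mul]
      exact mul_le_mul a1 a2 (abs_nonneg _) (by linarith)
    have hB : |∫ x in u n..u (n + 1), φ2 x| ≤
        (((u (n + 1)) ^ β - (u n) ^ β) * (h / 2)) * h := by
      have h2 := intervalIntegral.norm_integral_le_of_norm_le_const hbound2
      rw [Real.norm_eq_abs, hqp, abs_of_pos hh0] at h2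
      exact h2
    have hcm : |c| ≤ M1' := hM1'' _ hms
    rw [hdecomp, hzero, mul_zero, add_zero]
    calc |(∫ x in u n..u (n + 1), φ1 x) + c * (∫ x in u n..u (n + 1), φ2 x)|
        ≤ |∫ x in u n..u (n + 1), φ1 x| + |c| * |∫ x in u n..u (n + 1), φ2 x| := by
          rw [← abs_mul]; exact abs_add_le _ _
      _ ≤ C1 * h + M1' * ((((u (n + 1)) ^ β - (u n) ^ β) * (h / 2)) * h) := by
          apply add_le_add hA
          apply mul_le_mul hcm hB (abs_nonneg _) hM1'0
      _ = C1 * h + Cc * ((u (n + 1)) ^ β - (u n) ^ β) := by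
          simp only [hCc]; ring
  -- summation
  have hNh : (N : ℝ) * h = b := huN
  have h0β : (0:ℝ) ≤ (0:ℝ) ^ β := Real.rpow_nonneg le_rfl β
  have hCc0 : 0 ≤ Cc := by simp only [hCc]; positivity
  rw [hE]
  calc |∑ n ∈ Finset.range N, e n| ≤ ∑ n ∈ Finset.range N, |e n| :=
        Finset.abs_sum_le_sum_abs _ _
    _ ≤ ∑ n ∈ Finset.range N, (C1 * h + Cc * ((u (n + 1)) ^ β - (u n) ^ β)) :=
        Finset.sum_le_sum key
    _ = (N : ℝ) * (C1 * h) + Cc * (b ^ β - (0:ℝ) ^ β) := by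
        rw [Finset.sum_add_distrib, Finset.sum_const, Finset.card_range,
          ← Finset.mul_sum, Finset.sum_range_sub (fun k => (u k) ^ β), huN, hu0]
        simp [nsmul_eq_mul]
    _ ≤ D * h ^ 2 := by
        have e4 : (N : ℝ) * (C1 * h) = (b ^ β * M2' * b / 4) * h ^ 2 := by
          calc (N : ℝ) * (C1 * h) = ((N : ℝ) * h) * (b ^ β * (M2' * (h/2) ^ 2)) := by
                simp only [hC1]; ring
            _ = b * (b ^ β * (M2' * (h/2) ^ 2)) := by rw [hNh]
            _ = (b ^ β * M2' * b / 4) * h ^ 2 := by ring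
        have e5 : Cc * (b ^ β - (0:ℝ) ^ β) ≤ (M1' * b ^ β / 2) * h ^ 2 := by
          calc Cc * (b ^ β - (0:ℝ) ^ β) ≤ Cc * b ^ β :=
                mul_le_mul_of_nonneg_left (by linarith) hCc0
            _ = (M1' * b ^ β / 2) * h ^ 2 := by simp only [hCc]; ring
        rw [e4, hD, add_mul]
        exact add_le_add le_rfl e5
    _ ≤ (b ^ 2 * D + 1) / (N : ℝ) ^ 2 := by
        have e6 : h ^ 2 = b ^ 2 / (N : ℝ) ^ 2 := by
          rw [hh_def, div_pow]
        rw [e6]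
        have e7 : D * (b ^ 2 / (N : ℝ) ^ 2) = (b ^ 2 * D) / (N : ℝ) ^ 2 := by ring
        rw [e7]
        have hN2 : (0:ℝ) < (N : ℝ) ^ 2 := by positivity
        gcongr
        linarith
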